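/- arXiv:1104.5515 — 2 statements merged into one kernel-verified Lean document; each statement's English description precedes it below -/
import Mathlib

section
/- Let γ₁,…,γₙ ∈ ℂ be pairwise distinct, t ∈ ℂ nonzero, and a₁,…,aₙ ∈ ℂ. Let E₁(t) be the n×n matrix whose last row has entries [E₁(t)]_{n,k} = a_k t^{n−k} for 1 ≤ k ≤ n and all other entries 0. Then for all 1 ≤ i,j ≤ n, [S₀(t)⁻¹ · E₁(t) · S₀(t)]_{i,j} = [S₀(1)⁻¹]_{i,n} · Σ_{k=1}^{n} a_k γⱼ^{k−1}; in particular this conjugated matrix is independent of t. -/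
/-- For pairwise distinct `γ₁,…,γₙ ∈ ℂ`, nonzero `t ∈ ℂ` and `a₁,…,aₙ ∈ ℂ`, let `E₁(t)` be
the matrix whose only nonzero row is the last one, with entries `a_k t^{n−k}` (1-indexed).
Then `[S₀(t)⁻¹ · E₁(t) · S₀(t)]_{i,j} = [S₀(1)⁻¹]_{i,n} · Σ_{k=1}^{n} a_k γⱼ^{k−1}`;
in particular the conjugated matrix is independent of `t`. -/
theorem stmt6 (n : ℕ) (hn : 1 ≤ n) (γ : Fin n → ℂ) (hγ : Function.Injective γ)
    (t : ℂ) (ht : t ≠ 0) (a : Fin n → ℂ)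
    (S₀ : ℂ → Matrix (Fin n) (Fin n) ℂ)
    (hS₀ : ∀ s : ℂ, ∀ i j : Fin n, S₀ s i j = (γ j * s) ^ (i : ℕ))
    (E₁ : ℂ → Matrix (Fin n) (Fin n) ℂ)
    (hE₁ : ∀ s : ℂ, ∀ i j : Fin n, E₁ s i j =
      if (i : ℕ) = n - 1 then a j * s ^ (n - 1 - (j : ℕ)) else 0) :
    ∀ i j : Fin n, ((S₀ t)⁻¹ * E₁ t * S₀ t) i j =
      (S₀ 1)⁻¹ i ⟨n - 1, by omega⟩ * ∑ k : Fin n, a k * γ j ^ (k : ℕ) := by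
  intro i j
  have hlt : n - 1 < n := by omega
  set L : Fin n := ⟨n - 1, hlt⟩ with hL
  -- factor S₀ t = diag(t^i) * S₀ 1
  have hfac : S₀ t = Matrix.diagonal (fun i : Fin n => t ^ (i : ℕ)) * S₀ 1 := by
    ext p q
    rw [Matrix.diagonal_mul, hS₀, hS₀, mul_one, mul_pow]
    ring
  have hTinv : (Matrix.diagonal (fun i : Fin n => t ^ (i : ℕ)))⁻¹
      = Matrix.diagonal (fun i : Fin n => (t ^ (i : ℕ))⁻¹) := by
    apply Matrix.inv_eq_right_inv
    rw [Matrix.diagonal_mul_diagonal]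
    convert Matrix.diagonal_one with p
    exact mul_inv_cancel₀ (pow_ne_zero _ ht)
  have hinv : (S₀ t)⁻¹ = (S₀ 1)⁻¹ * Matrix.diagonal (fun i : Fin n => (t ^ (i : ℕ))⁻¹) := by
    rw [hfac, Matrix.mul_inv_rev, hTinv]
  have hinvL : (S₀ t)⁻¹ i L = (S₀ 1)⁻¹ i L * (t ^ (n - 1))⁻¹ := by
    rw [hinv, Matrix.mul_diagonal]
  -- compute E₁ t * S₀ t
  have hES : ∀ m : Fin n, (E₁ t * S₀ t) m j =
      if m = L then t ^ (n - 1) * ∑ k : Fin n, a k * γ j ^ (k : ℕ) else 0 := by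
    intro m
    rw [Matrix.mul_apply]
    by_cases hm : m = L
    · have hm' : (m : ℕ) = n - 1 := by rw [hm]
      simp only [hE₁, hS₀, hm', if_true, hm, Finset.mul_sum, show (L : ℕ) = n - 1 from rfl]
      apply Finset.sum_congr rfl
      intro k _
      have hk : (k : ℕ) ≤ n - 1 := by omega
      have : t ^ (n - 1 - (k : ℕ)) * t ^ (k : ℕ) = t ^ (n - 1) := by
        rw [← pow_add]
        congr 1
        omega
      calc a k * t ^ (n - 1 - (k : ℕ)) * (γ j * t) ^ (k : ℕ)
          = a k * γ j ^ (k : ℕ) * (t ^ (n - 1 - (k : ℕ)) * t ^ (k : ℕ)) := by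
            rw [mul_pow]; ring
        _ = t ^ (n - 1) * (a k * γ j ^ (k : ℕ)) := by rw [this]; ring
    · have hm' : (m : ℕ) ≠ n - 1 := fun h => hm (Fin.ext h)
      simp [hE₁, hm', hm]
  rw [Matrix.mul_assoc, Matrix.mul_apply]
  rw [Finset.sum_congr rfl (fun m _ => by rw [hES m])]
  simp only [mul_ite, mul_zero]
  rw [Finset.sum_ite_eq']
  simp only [Finset.mem_univ, if_true, hinvL]
  field_simp
end

section
/- Let a ≤ b be real numbers, let ψ : [a,b] → ℂ be continuously differentiable with t ↦ Re ψ(t) nondecreasing on [a,b], let g : [a,b] → ℂ be continuous, and let w : [a,b] → ℂ be differentiable with w′(t) = ψ′(t) w(t) + g(t) for all t ∈ [a,b] and w(b) = 0. Then for every t ∈ [a,b], |w(t)| ≤ ∫ₜᵇ |g(s)| ds. -/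
/-- If `ψ : [a,b] → ℂ` is continuously differentiable with `Re ψ` nondecreasing, `g` is
continuous, and `w` solves `w′ = ψ′ w + g` with `w(b) = 0`, then
`|w(t)| ≤ ∫ₜᵇ |g(s)| ds` for all `t ∈ [a,b]`. -/
theorem stmt12 (a b : ℝ) (hab : a ≤ b) (ψ ψ' g w : ℝ → ℂ)
    (hψ : ∀ t ∈ Set.Icc a b, HasDerivAt ψ (ψ' t) t)
    (hψ' : ContinuousOn ψ' (Set.Icc a b))
    (hmono : MonotoneOn (fun t => (ψ t).re) (Set.Icc a b))
    (hg : ContinuousOn g (Set.Icc a b))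
    (hw : ∀ t ∈ Set.Icc a b, HasDerivAt w (ψ' t * w t + g t) t)
    (hwb : w b = 0) :
    ∀ t ∈ Set.Icc a b, ‖w t‖ ≤ ∫ s in t..b, ‖g s‖ := by
  intro t ht
  obtain ⟨hat, htb⟩ := ht
  have ht : t ∈ Set.Icc a b := ⟨hat, htb⟩
  have hsub : Set.Icc t b ⊆ Set.Icc a b := Set.Icc_subset_Icc hat le_rfl
  set f : ℝ → ℂ := fun s => Complex.exp (-ψ s) * w s with hf
  have hψc : ContinuousOn ψ (Set.Icc a b) := fun s hs =>
    (hψ s hs).continuousAt.continuousWithinAt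
  have hcontInt : ContinuousOn (fun s => Complex.exp (-ψ s) * g s) (Set.Icc a b) :=
    (hψc.neg.cexp).mul hg
  have hderiv : ∀ s ∈ Set.Icc a b, HasDerivAt f (Complex.exp (-ψ s) * g s) s := by
    intro s hs
    have h1 : HasDerivAt (fun u => Complex.exp (-ψ u)) (Complex.exp (-ψ s) * (-ψ' s)) s :=
      ((hψ s hs).neg).cexp
    have h2 := h1.mul (hw s hs)
    refine h2.congr_deriv ?_
    ring
  have hFTC : (∫ s in t..b, Complex.exp (-ψ s) * g s) = f b - f t :=
    intervalIntegral.integral_eq_sub_of_hasDerivAt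
      (fun s hs => hderiv s (hsub (by rwa [Set.uIcc_of_le htb] at hs)))
      ((hcontInt.mono (by rw [Set.uIcc_of_le htb]; exact hsub)).intervalIntegrable)
  have hfb : f b = 0 := by simp [hf, hwb]
  have hft : f t = -(∫ s in t..b, Complex.exp (-ψ s) * g s) := by
    rw [hFTC, hfb]; ring
  have hwt : w t = -(Complex.exp (ψ t) * (∫ s in t..b, Complex.exp (-ψ s) * g s)) := by
    have : Complex.exp (ψ t) * f t = w t := by
      rw [hf]
      simp only []
      rw [← mul_assoc, ← Complex.exp_add]
      simp
    rw [← this, hft]; ring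
  have key : ‖w t‖ = ‖∫ s in t..b, Complex.exp (ψ t) * (Complex.exp (-ψ s) * g s)‖ := by
    rw [hwt, norm_neg, ← intervalIntegral.integral_const_mul]
  rw [key]
  calc ‖∫ s in t..b, Complex.exp (ψ t) * (Complex.exp (-ψ s) * g s)‖
      ≤ ∫ s in t..b, ‖Complex.exp (ψ t) * (Complex.exp (-ψ s) * g s)‖ :=
        intervalIntegral.norm_integral_le_integral_norm htb
    _ ≤ ∫ s in t..b, ‖g s‖ := by
        apply intervalIntegral.integral_mono_on htb
        · apply ContinuousOn.intervalIntegrable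
          rw [Set.uIcc_of_le htb]
          exact (continuousOn_const.mul ((hψc.mono hsub).neg.cexp.mul (hg.mono hsub))).norm
        · apply ContinuousOn.intervalIntegrable
          rw [Set.uIcc_of_le htb]
          exact (hg.mono hsub).norm
        · intro s hs
          have hts : t ≤ s := hs.1
          have hs' : s ∈ Set.Icc a b := hsub hs
          have hre : (ψ t).re ≤ (ψ s).re := hmono ht hs' hts
          rw [norm_mul, norm_mul,
            Complex.norm_exp, Complex.norm_exp]
          have : Real.exp (ψ t).re * Real.exp (-ψ s).re ≤ 1 := by
            rw [← Real.exp_add]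
            simp only [Complex.neg_re]
            exact Real.exp_le_one_iff.mpr (by linarith)
          calc Real.exp (ψ t).re * (Real.exp (-ψ s).re * ‖g s‖)
              = (Real.exp (ψ t).re * Real.exp (-ψ s).re) * ‖g s‖ := by ring
            _ ≤ 1 * ‖g s‖ := by
                exact mul_le_mul_of_nonneg_right this (norm_nonneg _)
            _ = ‖g s‖ := one_mul _
end
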